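/- Let S = {1,…,m} be a finite set, q a pmf on S with q(i) > 0 for all i, d > 0, X ⊆ ℝⁿ an open convex set, and k ≥ 1. If x ↦ f(x,i) is convex and of class C^k on X for each i ∈ S, then the function (x, λ, ν) ↦ Σ_{i∈S} q(i)·[ (1+d)·λ_i·exp((f(x,i) − λ_i − ν)/λ_i) + ν ] is convex and of class C^k on X × (0,∞)^m × ℝ. -/

import Mathlib

lemma persp_key (a b : ℝ) (ha : 0 ≤ a) (hb : 0 ≤ b) (hab : a + b = 1)
    (μ κ u v w : ℝ) (hμ : 0 < μ) (hκ : 0 < κ) (hw : w ≤ a * u + b * v) :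
    (a * μ + b * κ) * Real.exp (w / (a * μ + b * κ)) ≤
      a * (μ * Real.exp (u / μ)) + b * (κ * Real.exp (v / κ)) := by
  have hL : 0 < a * μ + b * κ := by
    rcases eq_or_lt_of_le ha with h | h
    · have hb1 : b = 1 := by linarith
      nlinarith
    · nlinarith [mul_nonneg hb hκ.le, mul_pos h hμ]
  have harg : (a * u + b * v) / (a * μ + b * κ) =
      (a * μ / (a * μ + b * κ)) * (u / μ) + (b * κ / (a * μ + b * κ)) * (v / κ) := by
    field_simp
  have hw1 : 0 ≤ a * μ / (a * μ + b * κ) := by positivity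
  have hw2 : 0 ≤ b * κ / (a * μ + b * κ) := by positivity
  have hws : a * μ / (a * μ + b * κ) + b * κ / (a * μ + b * κ) = 1 := by
    field_simp
  have hcv := convexOn_exp.2 (Set.mem_univ (u / μ)) (Set.mem_univ (v / κ)) hw1 hw2 hws
  simp only [smul_eq_mul] at hcv
  calc (a * μ + b * κ) * Real.exp (w / (a * μ + b * κ))
      ≤ (a * μ + b * κ) * Real.exp ((a * u + b * v) / (a * μ + b * κ)) := by
        gcongr
    _ ≤ (a * μ + b * κ) * ((a * μ / (a * μ + b * κ)) * Real.exp (u / μ) +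
          (b * κ / (a * μ + b * κ)) * Real.exp (v / κ)) := by
        rw [harg]
        exact mul_le_mul_of_nonneg_left hcv hL.le
    _ = a * (μ * Real.exp (u / μ)) + b * (κ * Real.exp (v / κ)) := by
        field_simp

lemma pos_comb (a b μ κ : ℝ) (ha : 0 ≤ a) (hb : 0 ≤ b) (hab : a + b = 1)
    (hμ : 0 < μ) (hκ : 0 < κ) : 0 < a * μ + b * κ := by
  rcases eq_or_lt_of_le ha with h | h
  · have hb1 : b = 1 := by linarith
    nlinarith
  · nlinarith [mul_nonneg hb hκ.le, mul_pos h hμ]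

theorem dual_objective_convex_and_smooth
    (n m : ℕ) (q : Fin m → ℝ) (hq0 : ∀ i, 0 < q i) (hq1 : ∑ i, q i = 1)
    (d : ℝ) (hd : 0 < d)
    (X : Set (Fin n → ℝ)) (hXo : IsOpen X) (hXconv : Convex ℝ X)
    (k : ℕ) (hk : 1 ≤ k)
    (f : (Fin n → ℝ) → Fin m → ℝ)
    (hconv : ∀ i, ConvexOn ℝ X (fun x => f x i))
    (hsmooth : ∀ i, ContDiffOn ℝ k (fun x => f x i) X) :
    let D : Set ((Fin n → ℝ) × (Fin m → ℝ) × ℝ) :=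
      {p | p.1 ∈ X ∧ ∀ i, 0 < p.2.1 i}
    let G : ((Fin n → ℝ) × (Fin m → ℝ) × ℝ) → ℝ := fun p =>
      ∑ i, q i * ((1 + d) * p.2.1 i *
          Real.exp ((f p.1 i - p.2.1 i - p.2.2) / p.2.1 i) + p.2.2)
    ConvexOn ℝ D G ∧ ContDiffOn ℝ k G D := by
  intro D G
  have hD : Convex ℝ D := by
    intro p hp p' hp' a b ha hb hab
    refine ⟨hXconv hp.1 hp'.1 ha hb hab, fun i => ?_⟩
    show 0 < (a • p + b • p').2.1 i
    simp only [Prod.smul_snd, Prod.snd_add, Prod.fst_add, Prod.smul_fst,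
      Pi.add_apply, Pi.smul_apply, smul_eq_mul]
    exact pos_comb a b _ _ ha hb hab (hp.2 i) (hp'.2 i)
  constructor
  · refine ⟨hD, ?_⟩
    intro p hp p' hp' a b ha hb hab
    show G (a • p + b • p') ≤ a • G p + b • G p'
    simp only [G, smul_eq_mul, Finset.mul_sum, ← Finset.sum_add_distrib,
      Prod.fst_add, Prod.smul_fst, Prod.snd_add, Prod.smul_snd,
      Pi.add_apply, Pi.smul_apply]
    apply Finset.sum_le_sum
    intro i _
    have hμ := hp.2 i
    have hκ := hp'.2 i
    have hf := (hconv i).2 hp.1 hp'.1 ha hb hab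
    simp only [smul_eq_mul] at hf
    have hw : f (a • p.1 + b • p'.1) i - (a * p.2.1 i + b * p'.2.1 i) -
        (a * p.2.2 + b * p'.2.2) ≤
        a * (f p.1 i - p.2.1 i - p.2.2) + b * (f p'.1 i - p'.2.1 i - p'.2.2) := by
      nlinarith
    have key := persp_key a b ha hb hab (p.2.1 i) (p'.2.1 i)
      (f p.1 i - p.2.1 i - p.2.2) (f p'.1 i - p'.2.1 i - p'.2.2) _ hμ hκ hw
    have hmul := mul_le_mul_of_nonneg_left key
      (mul_nonneg (hq0 i).le (by linarith : (0:ℝ) ≤ 1 + d))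
    nlinarith [hmul]
  · apply ContDiffOn.sum
    intro i _
    have hfx : ContDiffOn ℝ k (fun p : (Fin n → ℝ) × (Fin m → ℝ) × ℝ => f p.1 i) D :=
      (hsmooth i).comp contDiff_fst.contDiffOn (fun p hp => hp.1)
    have hlam : ContDiff ℝ k (fun p : (Fin n → ℝ) × (Fin m → ℝ) × ℝ => p.2.1 i) :=
      (contDiff_pi.mp contDiff_id i).comp (contDiff_fst.comp contDiff_snd)
    have hnu : ContDiff ℝ k (fun p : (Fin n → ℝ) × (Fin m → ℝ) × ℝ => p.2.2) :=
      contDiff_snd.comp contDiff_snd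
    have hden : ∀ p ∈ D, p.2.1 i ≠ 0 := fun p hp => (hp.2 i).ne'
    exact contDiffOn_const.mul
      (((contDiffOn_const.mul hlam.contDiffOn).mul
        (((hfx.sub hlam.contDiffOn).sub hnu.contDiffOn).div hlam.contDiffOn hden).exp).add
        hnu.contDiffOn)
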